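/- arXiv:2203.05411 — 2 statements merged into one kernel-verified Lean document; each statement's English description precedes it below -/
import Mathlib

section
/- (Proposition 1: optimality of transmitting at the minimal required rate.) Let a > 0, c > 0, b ≥ 0, d ≥ 0, σ_U² > 0, σ_D² > 0, γ_U > 0, γ_D > 0 with a·c > γ_U·γ_D·b·d, and define p̄_D = γ_D·(γ_U·σ_U²·d + a·σ_D²) / (a·c − γ_U·γ_D·b·d) and p̄_U = γ_U·(p̄_D·b + σ_U²) / a. Then every pair (p_U, p_D) with p_U ≥ 0, p_D ≥ 0 satisfying the rate constraints p_U·a ≥ γ_U·(p_D·b + σ_U²) and p_D·c ≥ γ_D·(p_U·d + σ_D²) satisfies p_U ≥ p̄_U and p_D ≥ p̄_D; in particular p_U + p_D ≥ p̄_U + p̄_D, so the total transmit power is minimized exactly when both rate constraints hold with equality. -/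
/-- Proposition 1: optimality of transmitting at the minimal required rate.
Every feasible power pair dominates the closed-form pair componentwise, hence
the total transmit power is minimized exactly when both rate constraints hold
with equality. -/
theorem stmt_2
    (a c b d σU2 σD2 γU γD : ℝ)
    (ha : 0 < a) (hc : 0 < c) (hb : 0 ≤ b) (hd : 0 ≤ d)
    (hσU : 0 < σU2) (hσD : 0 < σD2) (hγU : 0 < γU) (hγD : 0 < γD)
    (hstab : a * c > γU * γD * b * d)
    (pbarD pbarU : ℝ)
    (hpbarD : pbarD = γD * (γU * σU2 * d + a * σD2) / (a * c - γU * γD * b * d))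
    (hpbarU : pbarU = γU * (pbarD * b + σU2) / a) :
    ∀ pU pD : ℝ, 0 ≤ pU → 0 ≤ pD →
      pU * a ≥ γU * (pD * b + σU2) →
      pD * c ≥ γD * (pU * d + σD2) →
      pU ≥ pbarU ∧ pD ≥ pbarD ∧ pU + pD ≥ pbarU + pbarD := by
  intro pU pD hpU hpD h1 h2
  have hden : 0 < a * c - γU * γD * b * d := by linarith
  have key : pD * (a * c - γU * γD * b * d) ≥ γD * (γU * σU2 * d + a * σD2) := by
    have m1 : (γD * d) * (γU * (pD * b + σU2)) ≤ (γD * d) * (pU * a) :=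
      mul_le_mul_of_nonneg_left h1 (by positivity)
    have m2 : a * (γD * (pU * d + σD2)) ≤ a * (pD * c) :=
      mul_le_mul_of_nonneg_left h2 ha.le
    nlinarith
  have hDb : pD ≥ pbarD := by
    rw [hpbarD, ge_iff_le, div_le_iff₀ hden]
    linarith
  have hUb : pU ≥ pbarU := by
    rw [hpbarU, ge_iff_le, div_le_iff₀ ha]
    nlinarith [mul_le_mul_of_nonneg_left hDb (mul_nonneg hγU.le hb)]
  exact ⟨hUb, hDb, by linarith⟩
end

section
/- (Monotonicity of the minimal powers in the uplink rate threshold.) Let a > 0, c > 0, b ≥ 0, d ≥ 0, σ_U² > 0, σ_D² > 0, γ_D > 0 be fixed, and for γ_U > 0 with a·c > γ_U·γ_D·b·d define p̄_D(γ_U) = γ_D·(γ_U·σ_U²·d + a·σ_D²) / (a·c − γ_U·γ_D·b·d) and p̄_U(γ_U) = γ_U·(p̄_D(γ_U)·b + σ_U²) / a. If 0 < γ_U < γ_U′ and a·c > γ_U′·γ_D·b·d, then p̄_U(γ_U′) > p̄_U(γ_U), p̄_D(γ_U′) ≥ p̄_D(γ_U), and p̄_U(γ_U′) + p̄_D(γ_U′)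 > p̄_U(γ_U) + p̄_D(γ_U). -/
/-- Monotonicity of the minimal powers in the uplink SINR threshold: if the
uplink threshold increases (while the stability condition continues to hold),
the minimal uplink power strictly increases, the minimal downlink power does
not decrease, and the total transmit power strictly increases. -/
theorem stmt_4
    (a c b d σU2 σD2 γD : ℝ)
    (ha : 0 < a) (hc : 0 < c) (hb : 0 ≤ b) (hd : 0 ≤ d)
    (hσU : 0 < σU2) (hσD : 0 < σD2) (hγD : 0 < γD)
    (pbarD pbarU : ℝ → ℝ)
    (hpbarD : ∀ γU : ℝ,
      pbarD γU = γD * (γU * σU2 * d + a * σD2) / (a * c - γU * γD * b * d))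
    (hpbarU : ∀ γU : ℝ, pbarU γU = γU * (pbarD γU * b + σU2) / a)
    (γU γU' : ℝ) (hγU : 0 < γU) (hlt : γU < γU')
    (hstab' : a * c > γU' * γD * b * d) :
    pbarU γU' > pbarU γU ∧
    pbarD γU' ≥ pbarD γU ∧
    pbarU γU' + pbarD γU' > pbarU γU + pbarD γU := by
  have hden' : 0 < a * c - γU' * γD * b * d := by linarith
  have hdenle : a * c - γU' * γD * b * d ≤ a * c - γU * γD * b * d := by
    nlinarith [mul_nonneg (mul_nonneg (mul_nonneg (sub_nonneg.2 hlt.le) hγD.le) hb) hd]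
  have hden : 0 < a * c - γU * γD * b * d := lt_of_lt_of_le hden' hdenle
  have hnum : 0 ≤ γD * (γU * σU2 * d + a * σD2) := by
    apply mul_nonneg hγD.le
    nlinarith [mul_nonneg (mul_nonneg hγU.le hσU.le) hd]
  have hnumle : γD * (γU * σU2 * d + a * σD2) ≤ γD * (γU' * σU2 * d + a * σD2) := by
    nlinarith [mul_nonneg (mul_nonneg (mul_nonneg (sub_nonneg.2 hlt.le) hσU.le) hd) hγD.le]
  have hD : pbarD γU ≤ pbarD γU' := by
    rw [hpbarD, hpbarD]
    exact div_le_div₀ (hnum.trans hnumle) hnumle hden' hdenle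
  have hDpos : 0 ≤ pbarD γU := by
    rw [hpbarD]; exact div_nonneg hnum hden.le
  have hU : pbarU γU < pbarU γU' := by
    rw [hpbarU, hpbarU, div_lt_div_iff₀ ha ha]
    have hX : 0 < pbarD γU * b + σU2 := by nlinarith [mul_nonneg hDpos hb]
    have hX' : pbarD γU * b + σU2 ≤ pbarD γU' * b + σU2 := by
      nlinarith [mul_le_mul_of_nonneg_right hD hb]
    have h1 : γU * (pbarD γU * b + σU2) < γU' * (pbarD γU' * b + σU2) :=
      lt_of_lt_of_le (mul_lt_mul_of_pos_right hlt hX)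
        (mul_le_mul_of_nonneg_left hX' (hγU.trans hlt).le)
    exact mul_lt_mul_of_pos_right h1 ha
  exact ⟨hU, hD, by linarith⟩
end
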